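/- Let (V, ω) be a multisymplectic vector space of degree k+1, let U and W be linear subspaces of V, and let l₁, l₂ ∈ {1, …, k} with l₁ + l₂ ≤ k + 1. Then U_I^{⊥,l₁} ∩ W_I^{⊥,l₂} ⊆ (U + W)_I^{⊥,l₁+l₂−1}. -/

import Mathlib

open Module

/-- Type-I l-th orthogonal complement of `W` with respect to the alternating
`(k+1)`-form `ω`: vectors `v` such that `ω (v, w₁, …, w_l, u₁, …, u_{k-l}) = 0`
for all `w₁, …, w_l ∈ W` (the first `l` entries after `v`) and arbitrary
remaining entries. -/
def TypeIOrth {V : Type*} [AddCommGroup V] [Module ℝ V] {k : ℕ}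
    (ω : V [⋀^Fin (k+1)]→ₗ[ℝ] ℝ) (W : Submodule ℝ V) (l : ℕ) : Set V :=
  {v | ∀ f : Fin k → V, (∀ i : Fin k, (i : ℕ) < l → f i ∈ W) → ω (Fin.cons v f) = 0}

lemma cardFinLt {k m : ℕ} (hmk : m ≤ k) :
    Fintype.card {i : Fin k // (i : ℕ) < m} = m := by
  have e : Fin m ≃ {i : Fin k // (i : ℕ) < m} :=
    { toFun := fun j => ⟨Fin.castLE hmk j, j.isLt⟩
      invFun := fun i => ⟨(i : Fin k), i.2⟩
      left_inv := fun j => rfl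
      right_inv := fun i => rfl }
  rw [← Fintype.card_congr e, Fintype.card_fin]

/-- If `v` is in the Type-I `l`-orthogonal of `U`, and at least `l` entries of `f`
lie in `U`, then `ω (Fin.cons v f) = 0`, by permuting those entries to the front. -/
lemma auxA {V : Type*} [AddCommGroup V] [Module ℝ V] {k : ℕ}
    (ω : V [⋀^Fin (k+1)]→ₗ[ℝ] ℝ) (U : Submodule ℝ V) {l : ℕ} (hlk : l ≤ k)
    {v : V} (hv : v ∈ TypeIOrth ω U l) (f : Fin k → V)
    (T0 : Finset (Fin k)) (h : l ≤ T0.card) (hT0 : ∀ i ∈ T0, f i ∈ U) :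
    ω (Fin.cons v f) = 0 := by
  classical
  obtain ⟨T, hTsub, hTcard⟩ := Finset.exists_subset_card_eq h
  have hTU : ∀ i ∈ T, f i ∈ U := fun i hi => hT0 i (hTsub hi)
  have hcard1 : Fintype.card {i : Fin k // (i : ℕ) < l} = l := cardFinLt hlk
  have hcard2 : Fintype.card {i : Fin k // i ∈ T} = l := by
    simpa [Fintype.card_coe] using hTcard
  have eP : {i : Fin k // (i : ℕ) < l} ≃ {i : Fin k // i ∈ T} :=
    Fintype.equivOfCardEq (hcard1.trans hcard2.symm)
  have eN : {i : Fin k // ¬ (i : ℕ) < l} ≃ {i : Fin k // i ∉ T} :=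
    Fintype.equivOfCardEq (by
      rw [Fintype.card_subtype_compl, Fintype.card_subtype_compl, hcard1, hcard2])
  set σ : Equiv.Perm (Fin k) :=
    (Equiv.sumCompl (fun i : Fin k => (i : ℕ) < l)).symm.trans
      ((eP.sumCongr eN).trans (Equiv.sumCompl (fun i : Fin k => i ∈ T))) with hσdef
  have hσ : ∀ j : Fin k, (j : ℕ) < l → σ j ∈ T := by
    intro j hj
    have : (Equiv.sumCompl (fun i : Fin k => (i : ℕ) < l)).symm j = Sum.inl ⟨j, hj⟩ :=
      Equiv.sumCompl_symm_apply_of_pos (p := fun i : Fin k => (i : ℕ) < l) hj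
    simp [hσdef, this]
  set σ' : Equiv.Perm (Fin (k+1)) :=
    ((finSuccEquiv k).trans (Equiv.optionCongr σ)).trans (finSuccEquiv k).symm with hσ'def
  have hcomp : (Fin.cons v f : Fin (k+1) → V) ∘ σ' = Fin.cons v (f ∘ σ) := by
    funext i
    refine Fin.cases ?_ (fun j => ?_) i
    · simp [hσ'def]
    · simp [hσ'def]
  have h0 : ω (Fin.cons v (f ∘ σ)) = 0 := by
    apply hv
    intro i hi
    exact hTU _ (hσ i hi)
  have hperm := ω.map_perm (Fin.cons v f) σ'
  rw [hcomp, h0] at hperm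
  rcases Int.units_eq_one_or (Equiv.Perm.sign σ') with hs | hs <;>
    rw [hs] at hperm <;> simpa using hperm.symm

theorem typeIOrth_inter_subset_sup
    {V : Type*} [AddCommGroup V] [Module ℝ V] [FiniteDimensional ℝ V]
    {k : ℕ} (hk : 1 ≤ k) (ω : V [⋀^Fin (k+1)]→ₗ[ℝ] ℝ)
    (hnd : ∀ v : V, (∀ u : Fin k → V, ω (Fin.cons v u) = 0) → v = 0)
    (U W : Submodule ℝ V) (l₁ l₂ : ℕ)
    (hl₁ : 1 ≤ l₁) (hl₁k : l₁ ≤ k) (hl₂ : 1 ≤ l₂) (hl₂k : l₂ ≤ k)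
    (hsum : l₁ + l₂ ≤ k + 1) :
    TypeIOrth ω U l₁ ∩ TypeIOrth ω W l₂ ⊆ TypeIOrth ω (U ⊔ W) (l₁ + l₂ - 1) := by
  classical
  rintro v ⟨hvU, hvW⟩
  set m := l₁ + l₂ - 1 with hmdef
  have hmk : m ≤ k := by omega
  intro f hf
  -- Strong claim: induct on the number of "unsplit" entries
  suffices H : ∀ n (f : Fin k → V), (∀ i : Fin k, (i : ℕ) < m → f i ∈ U ⊔ W) →
      (Finset.univ.filter (fun i : Fin k => (i : ℕ) < m ∧ f i ∉ U ∧ f i ∉ W)).card ≤ n →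
      ω (Fin.cons v f) = 0 by
    exact H _ f hf le_rfl
  intro n
  induction n with
  | zero =>
    intro f hfm hcard
    have hUW : ∀ i : Fin k, (i : ℕ) < m → f i ∈ U ∨ f i ∈ W := by
      intro i hi
      by_contra hcon
      push_neg at hcon
      have hmem : i ∈ Finset.univ.filter
          (fun i : Fin k => (i : ℕ) < m ∧ f i ∉ U ∧ f i ∉ W) := by
        simp [hi, hcon.1, hcon.2]
      have := Finset.card_pos.mpr ⟨i, hmem⟩
      omega
    set A := Finset.univ.filter (fun i : Fin k => (i : ℕ) < m ∧ f i ∈ U) with hA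
    set B := Finset.univ.filter (fun i : Fin k => (i : ℕ) < m ∧ f i ∉ U) with hB
    have hdisj : Disjoint A B := by
      rw [Finset.disjoint_left]
      intro a ha hb
      exact (Finset.mem_filter.mp hb).2.2 (Finset.mem_filter.mp ha).2.2
    have hunion : A ∪ B = Finset.univ.filter (fun i : Fin k => (i : ℕ) < m) := by
      ext a
      simp only [hA, hB, Finset.mem_union, Finset.mem_filter, Finset.mem_univ, true_and]
      tauto
    have hmcard : (Finset.univ.filter (fun i : Fin k => (i : ℕ) < m)).card = m := by
      rw [← Fintype.card_subtype]
      exact cardFinLt hmk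
    have hsumcard : A.card + B.card = m := by
      rw [← Finset.card_union_of_disjoint hdisj, hunion, hmcard]
    have hor : l₁ ≤ A.card ∨ l₂ ≤ B.card := by omega
    rcases hor with hA' | hB'
    · refine auxA ω U hl₁k hvU f A hA' ?_
      intro a ha
      exact (Finset.mem_filter.mp ha).2.2
    · refine auxA ω W hl₂k hvW f B hB' ?_
      intro a ha
      have ha' := (Finset.mem_filter.mp ha).2
      rcases hUW a ha'.1 with h | h
      · exact absurd h ha'.2
      · exact h
  | succ n ih =>
    intro f hfm hcard
    set S := Finset.univ.filter (fun i : Fin k => (i : ℕ) < m ∧ f i ∉ U ∧ f i ∉ W) with hS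
    rcases Finset.eq_empty_or_nonempty S with hSe | ⟨i, hi⟩
    · exact ih f hfm (by rw [← hS, hSe]; simp)
    · have hi' := Finset.mem_filter.mp hi
      obtain ⟨u, hu, w, hw, huw⟩ := Submodule.mem_sup.mp (hfm i hi'.2.1)
      have hsplit : ω (Fin.cons v f) =
          ω (Fin.cons v (Function.update f i u)) +
          ω (Fin.cons v (Function.update f i w)) := by
        conv_lhs => rw [← Function.update_eq_self i f, ← huw]
        rw [Fin.cons_update, Fin.cons_update, Fin.cons_update]
        exact (ω : MultilinearMap ℝ (fun _ : Fin (k+1) => V) ℝ).map_update_add _ _ _ _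
      have key : ∀ x : V, x ∈ U ⊔ W → (x ∈ U ∨ x ∈ W) →
          ω (Fin.cons v (Function.update f i x)) = 0 := by
        intro x hxsup hxor
        apply ih
        · intro j hj
          by_cases hji : j = i
          · subst hji; simpa using hxsup
          · rw [Function.update_of_ne hji]; exact hfm j hj
        · have hsub : Finset.univ.filter
              (fun j : Fin k => (j : ℕ) < m ∧
                Function.update f i x j ∉ U ∧ Function.update f i x j ∉ W) ⊆
              S.erase i := by
            intro j hj
            simp only [Finset.mem_filter, Finset.mem_univ, true_and] at hj
            have hji : j ≠ i := by
              intro hji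
              subst hji
              rw [Function.update_self] at hj
              tauto
            rw [Function.update_of_ne hji] at hj
            refine Finset.mem_erase.mpr ⟨hji, ?_⟩
            simp only [hS, Finset.mem_filter, Finset.mem_univ, true_and]
            exact hj
          have h1 := Finset.card_le_card hsub
          have h2 : (S.erase i).card = S.card - 1 := Finset.card_erase_of_mem hi
          have h3 : 1 ≤ S.card := Finset.card_pos.mpr ⟨i, hi⟩
          omega
      rw [hsplit, key u (Submodule.mem_sup_left hu) (Or.inl hu),
        key w (Submodule.mem_sup_right hw) (Or.inr hw), add_zero]
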